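/- Identify ℝ³ with the pure quaternions via (x,y,z) ↦ x i + y j + z k. Let R be the set of the 12 roots of A₃ (the vectors whose coordinates are a permutation of (±1,±1,0)), each normalized to unit length. Then the subgroup of the unit group ℍˣ of the real quaternions generated by all products p·q with p, q ∈ R (regarded as pure unit quaternions) equals the set of the 24 Hurwitz units {±1, ±i, ±j, ±k, (±1±i±j±k)/2}; in particular the 12 reflections of A₃ generate exactly 24 rotors. -/

import Mathlib

noncomputable section

/-- The quaternion unit `i`. -/
def qi : Quaternion ℝ := ⟨0, 1, 0, 0⟩
/-- The quaternion unit `j`. -/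
def qj : Quaternion ℝ := ⟨0, 0, 1, 0⟩
/-- The quaternion unit `k`. -/
def qk : Quaternion ℝ := ⟨0, 0, 0, 1⟩

/-- The sign set `{1, -1}`. -/
def pm : Set ℝ := {1, -1}

/-- The 12 roots of `A₃` (the permutations of `(±1, ±1, 0)`), normalized to
unit length and regarded as pure quaternions. -/
def rootsA3 : Set (Quaternion ℝ) :=
  {x | ∃ ε₁ ∈ pm, ∃ ε₂ ∈ pm,
    (x = (Real.sqrt 2)⁻¹ • (ε₁ • qi + ε₂ • qj) ∨
     x = (Real.sqrt 2)⁻¹ • (ε₁ • qi + ε₂ • qk) ∨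
     x = (Real.sqrt 2)⁻¹ • (ε₁ • qj + ε₂ • qk))}

/-- The set of units of ℍ of the form `p·q` with `p, q` normalized roots of
`A₃` (the rotors encoding composed reflections). -/
def rotorGenA3 : Set (Quaternion ℝ)ˣ :=
  {u | ∃ p ∈ rootsA3, ∃ q ∈ rootsA3, (u : Quaternion ℝ) = p * q}

/-- The 24 Hurwitz units `±1, ±i, ±j, ±k, (±1±i±j±k)/2`. -/
def hurwitzUnits : Set (Quaternion ℝ) :=
  {1, -1, qi, -qi, qj, -qj, qk, -qk} ∪
  {x | ∃ ε₀ ∈ pm, ∃ ε₁ ∈ pm, ∃ ε₂ ∈ pm, ∃ ε₃ ∈ pm,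
    x = (2 : ℝ)⁻¹ • (ε₀ • (1 : Quaternion ℝ) + ε₁ • qi + ε₂ • qj + ε₃ • qk)}

/- ### Auxiliary machinery -/

set_option maxRecDepth 40000
set_option maxHeartbeats 2000000

instance : DecidableEq (Quaternion ℤ) := fun a b =>
  decidable_of_iff (a.re = b.re ∧ a.imI = b.imI ∧ a.imJ = b.imJ ∧ a.imK = b.imK)
    QuaternionAlgebra.ext_iff.symm

instance (x : Quaternion ℤ) (y : QuaternionAlgebra ℤ (@Neg.neg ℤ _ (@OfNat.ofNat ℤ 1 (@One.toOfNat1 ℤ _)))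
    (@OfNat.ofNat ℤ 0 (@Zero.toOfNat0 ℤ _)) (@Neg.neg ℤ _ (@OfNat.ofNat ℤ 1 (@One.toOfNat1 ℤ _)))) :
    Decidable (@Eq (Quaternion ℤ) x y) := (inferInstance : DecidableEq (Quaternion ℤ)) x y

instance (x : QuaternionAlgebra ℤ (@Neg.neg ℤ _ (@OfNat.ofNat ℤ 1 (@One.toOfNat1 ℤ _)))
    (@OfNat.ofNat ℤ 0 (@Zero.toOfNat0 ℤ _)) (@Neg.neg ℤ _ (@OfNat.ofNat ℤ 1 (@One.toOfNat1 ℤ _))))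
    (l : List (Quaternion ℤ)) :
    Decidable (@Membership.mem (QuaternionAlgebra ℤ (@Neg.neg ℤ _ (@OfNat.ofNat ℤ 1 (@One.toOfNat1 ℤ _)))
      (@OfNat.ofNat ℤ 0 (@Zero.toOfNat0 ℤ _)) (@Neg.neg ℤ _ (@OfNat.ofNat ℤ 1 (@One.toOfNat1 ℤ _))))
      (List (Quaternion ℤ)) (@List.instMembership (Quaternion ℤ)) l x) :=
  (inferInstance : ∀ (z : Quaternion ℤ) (l : List (Quaternion ℤ)), Decidable (z ∈ l)) x l

instance (x : QuaternionAlgebra ℤ (@Neg.neg ℤ _ (@OfNat.ofNat ℤ 1 (@One.toOfNat1 ℤ _)))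
    (@OfNat.ofNat ℤ 0 (@Zero.toOfNat0 ℤ _)) (@Neg.neg ℤ _ (@OfNat.ofNat ℤ 1 (@One.toOfNat1 ℤ _))))
    (l : List (Quaternion ℤ)) :
    Decidable (@Membership.mem (Quaternion ℤ) (List (Quaternion ℤ)) (@List.instMembership (Quaternion ℤ)) l x) :=
  (inferInstance : ∀ (z : Quaternion ℤ) (l : List (Quaternion ℤ)), Decidable (z ∈ l)) x l

section
variable (r a b c d a' b' c' d' : ℝ)
@[simp] theorem smul_mk_re : (@HSMul.hSMul ℝ (Quaternion ℝ) (Quaternion ℝ) _ r ⟨a, b, c, d⟩).re = r * a := rfl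
@[simp] theorem smul_mk_imI : (@HSMul.hSMul ℝ (Quaternion ℝ) (Quaternion ℝ) _ r ⟨a, b, c, d⟩).imI = r * b := rfl
@[simp] theorem smul_mk_imJ : (@HSMul.hSMul ℝ (Quaternion ℝ) (Quaternion ℝ) _ r ⟨a, b, c, d⟩).imJ = r * c := rfl
@[simp] theorem smul_mk_imK : (@HSMul.hSMul ℝ (Quaternion ℝ) (Quaternion ℝ) _ r ⟨a, b, c, d⟩).imK = r * d := rfl
@[simp] theorem add_mk_re : (@HAdd.hAdd (Quaternion ℝ) (Quaternion ℝ) (Quaternion ℝ) _ ⟨a, b, c, d⟩ ⟨a', b', c', d'⟩).re = a + a' := rfl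
@[simp] theorem add_mk_imI : (@HAdd.hAdd (Quaternion ℝ) (Quaternion ℝ) (Quaternion ℝ) _ ⟨a, b, c, d⟩ ⟨a', b', c', d'⟩).imI = b + b' := rfl
@[simp] theorem add_mk_imJ : (@HAdd.hAdd (Quaternion ℝ) (Quaternion ℝ) (Quaternion ℝ) _ ⟨a, b, c, d⟩ ⟨a', b', c', d'⟩).imJ = c + c' := rfl
@[simp] theorem add_mk_imK : (@HAdd.hAdd (Quaternion ℝ) (Quaternion ℝ) (Quaternion ℝ) _ ⟨a, b, c, d⟩ ⟨a', b', c', d'⟩).imK = d + d' := rfl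
@[simp] theorem mul_mk_re : (@HMul.hMul (Quaternion ℝ) (Quaternion ℝ) (Quaternion ℝ) _ ⟨a, b, c, d⟩ ⟨a', b', c', d'⟩).re =
    a * a' - b * b' - c * c' - d * d' := Quaternion.re_mul _ _
@[simp] theorem mul_mk_imI : (@HMul.hMul (Quaternion ℝ) (Quaternion ℝ) (Quaternion ℝ) _ ⟨a, b, c, d⟩ ⟨a', b', c', d'⟩).imI =
    a * b' + b * a' + c * d' - d * c' := Quaternion.imI_mul _ _
@[simp] theorem mul_mk_imJ : (@HMul.hMul (Quaternion ℝ) (Quaternion ℝ) (Quaternion ℝ) _ ⟨a, b, c, d⟩ ⟨a', b', c', d'⟩).imJ =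
    a * c' - b * d' + c * a' + d * b' := Quaternion.imJ_mul _ _
@[simp] theorem mul_mk_imK : (@HMul.hMul (Quaternion ℝ) (Quaternion ℝ) (Quaternion ℝ) _ ⟨a, b, c, d⟩ ⟨a', b', c', d'⟩).imK =
    a * d' + b * c' - c * b' + d * a' := Quaternion.imK_mul _ _
@[simp] theorem neg_mk_re : (@Neg.neg (Quaternion ℝ) _ ⟨a, b, c, d⟩).re = -a := rfl
@[simp] theorem neg_mk_imI : (@Neg.neg (Quaternion ℝ) _ ⟨a, b, c, d⟩).imI = -b := rfl
@[simp] theorem neg_mk_imJ : (@Neg.neg (Quaternion ℝ) _ ⟨a, b, c, d⟩).imJ = -c := rfl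
@[simp] theorem neg_mk_imK : (@Neg.neg (Quaternion ℝ) _ ⟨a, b, c, d⟩).imK = -d := rfl
end

/-- Unnormalized integer roots of `A₃`. -/
def RL : List (Quaternion ℤ) := [⟨0,1,1,0⟩, ⟨0,1,0,1⟩, ⟨0,0,1,1⟩, ⟨0,1,-1,0⟩, ⟨0,1,0,-1⟩, ⟨0,0,1,-1⟩, ⟨0,-1,1,0⟩, ⟨0,-1,0,1⟩, ⟨0,0,-1,1⟩, ⟨0,-1,-1,0⟩, ⟨0,-1,0,-1⟩, ⟨0,0,-1,-1⟩]

/-- Doubled Hurwitz units, as integer quaternions. -/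
def DL : List (Quaternion ℤ) := [⟨2,0,0,0⟩, ⟨-2,0,0,0⟩, ⟨0,2,0,0⟩, ⟨0,-2,0,0⟩, ⟨0,0,2,0⟩, ⟨0,0,-2,0⟩, ⟨0,0,0,2⟩, ⟨0,0,0,-2⟩, ⟨1,1,1,1⟩, ⟨1,1,1,-1⟩, ⟨1,1,-1,1⟩, ⟨1,1,-1,-1⟩, ⟨1,-1,1,1⟩, ⟨1,-1,1,-1⟩, ⟨1,-1,-1,1⟩, ⟨1,-1,-1,-1⟩, ⟨-1,1,1,1⟩, ⟨-1,1,1,-1⟩, ⟨-1,1,-1,1⟩, ⟨-1,1,-1,-1⟩, ⟨-1,-1,1,1⟩, ⟨-1,-1,1,-1⟩, ⟨-1,-1,-1,1⟩, ⟨-1,-1,-1,-1⟩]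

theorem gen_memDL : ∀ a ∈ RL, ∀ b ∈ RL, a * b ∈ DL := by decide

theorem mul_closedDL : ∀ a ∈ DL, ∀ b ∈ DL, ∃ c ∈ DL, a * b = c + c := by decide

theorem inv_closedDL : ∀ a ∈ DL, ∃ b ∈ DL, a * b = ⟨4,0,0,0⟩ := by decide

theorem surj_witDL : ∀ c ∈ DL, ∃ a₁ ∈ RL, ∃ b₁ ∈ RL, ∃ a₂ ∈ RL, ∃ b₂ ∈ RL,
    (a₁ * b₁) * (a₂ * b₂) = c + c := by decide

theorem DL_ne_zero : ∀ c ∈ DL, c ≠ 0 := by decide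

theorem DL_nodup : DL.Nodup := by decide

open Quaternion

/-- Componentwise cast ring hom from integer quaternions to real quaternions. -/
def g : Quaternion ℤ →+* Quaternion ℝ where
  toFun x := ⟨(x.re : ℝ), (x.imI : ℝ), (x.imJ : ℝ), (x.imK : ℝ)⟩
  map_one' := by ext <;> simp
  map_mul' x y := by
    ext <;> simp [Quaternion.re_mul, Quaternion.imI_mul, Quaternion.imJ_mul,
      Quaternion.imK_mul] <;> push_cast <;> ring
  map_zero' := by ext <;> simp
  map_add' x y := by ext <;> push_cast <;> simp

theorem g_mk (a b c d : ℤ) :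
    g ⟨a,b,c,d⟩ = (⟨(a : ℝ), (b : ℝ), (c : ℝ), (d : ℝ)⟩ : Quaternion ℝ) := rfl

theorem g_apply (x : Quaternion ℤ) :
    g x = (⟨(x.re : ℝ), (x.imI : ℝ), (x.imJ : ℝ), (x.imK : ℝ)⟩ : Quaternion ℝ) := rfl

theorem g_inj : Function.Injective g := by
  intro x y h
  have h1 : (x.re : ℝ) = (y.re : ℝ) := congrArg QuaternionAlgebra.re h
  have h2 : (x.imI : ℝ) = (y.imI : ℝ) := congrArg QuaternionAlgebra.imI h
  have h3 : (x.imJ : ℝ) = (y.imJ : ℝ) := congrArg QuaternionAlgebra.imJ h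
  have h4 : (x.imK : ℝ) = (y.imK : ℝ) := congrArg QuaternionAlgebra.imK h
  exact QuaternionAlgebra.ext (by exact_mod_cast h1) (by exact_mod_cast h2)
    (by exact_mod_cast h3) (by exact_mod_cast h4)

theorem g_ne_zero {c : Quaternion ℤ} (hc : c ≠ 0) : g c ≠ 0 := fun h =>
  hc (g_inj (h.trans (map_zero g).symm))

theorem half_g_ne_zero {c : Quaternion ℤ} (hc : c ∈ DL) : (2:ℝ)⁻¹ • g c ≠ 0 :=
  smul_ne_zero (by norm_num) (g_ne_zero (DL_ne_zero c hc))

theorem sqrt2_sq : (Real.sqrt 2)⁻¹ * (Real.sqrt 2)⁻¹ = (2:ℝ)⁻¹ := by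
  rw [← mul_inv]
  norm_num [Real.mul_self_sqrt]

theorem smul_mul_smul' (r t : ℝ) (x y : Quaternion ℝ) :
    (r • x) * (t • y) = (r * t) • (x * y) := by
  rw [smul_mul_assoc, mul_smul_comm, smul_smul]

/-- Product of two normalized integer roots. -/
theorem key_prod (a b : Quaternion ℤ) :
    ((Real.sqrt 2)⁻¹ • g a) * ((Real.sqrt 2)⁻¹ • g b) = (2:ℝ)⁻¹ • g (a * b) := by
  rw [smul_mul_smul', sqrt2_sq, map_mul]

theorem key_prod2 {c₁ c₂ c₃ : Quaternion ℤ} (h : c₁ * c₂ = c₃ + c₃) :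
    ((2:ℝ)⁻¹ • g c₁) * ((2:ℝ)⁻¹ • g c₂) = (2:ℝ)⁻¹ • g c₃ := by
  rw [smul_mul_smul', ← map_mul, h, map_add, smul_add, ← add_smul]
  norm_num

theorem roots_fwd : ∀ p ∈ rootsA3, ∃ a ∈ RL, p = (Real.sqrt 2)⁻¹ • g a := by
  intro p hp
  obtain ⟨e1, he1, e2, he2, hd⟩ := hp
  simp only [pm, Set.mem_insert_iff, Set.mem_singleton_iff] at he1 he2
  rcases he1 with rfl | rfl <;> rcases he2 with rfl | rfl <;> rcases hd with h | h | h
  · exact ⟨(⟨0,1,1,0⟩ : Quaternion ℤ), by decide, by rw [h]; congr 1; ext <;> norm_num [qi,qj,qk,g_mk]⟩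
  · exact ⟨(⟨0,1,0,1⟩ : Quaternion ℤ), by decide, by rw [h]; congr 1; ext <;> norm_num [qi,qj,qk,g_mk]⟩
  · exact ⟨(⟨0,0,1,1⟩ : Quaternion ℤ), by decide, by rw [h]; congr 1; ext <;> norm_num [qi,qj,qk,g_mk]⟩
  · exact ⟨(⟨0,1,-1,0⟩ : Quaternion ℤ), by decide, by rw [h]; congr 1; ext <;> norm_num [qi,qj,qk,g_mk]⟩
  · exact ⟨(⟨0,1,0,-1⟩ : Quaternion ℤ), by decide, by rw [h]; congr 1; ext <;> norm_num [qi,qj,qk,g_mk]⟩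
  · exact ⟨(⟨0,0,1,-1⟩ : Quaternion ℤ), by decide, by rw [h]; congr 1; ext <;> norm_num [qi,qj,qk,g_mk]⟩
  · exact ⟨(⟨0,-1,1,0⟩ : Quaternion ℤ), by decide, by rw [h]; congr 1; ext <;> norm_num [qi,qj,qk,g_mk]⟩
  · exact ⟨(⟨0,-1,0,1⟩ : Quaternion ℤ), by decide, by rw [h]; congr 1; ext <;> norm_num [qi,qj,qk,g_mk]⟩
  · exact ⟨(⟨0,0,-1,1⟩ : Quaternion ℤ), by decide, by rw [h]; congr 1; ext <;> norm_num [qi,qj,qk,g_mk]⟩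
  · exact ⟨(⟨0,-1,-1,0⟩ : Quaternion ℤ), by decide, by rw [h]; congr 1; ext <;> norm_num [qi,qj,qk,g_mk]⟩
  · exact ⟨(⟨0,-1,0,-1⟩ : Quaternion ℤ), by decide, by rw [h]; congr 1; ext <;> norm_num [qi,qj,qk,g_mk]⟩
  · exact ⟨(⟨0,0,-1,-1⟩ : Quaternion ℤ), by decide, by rw [h]; congr 1; ext <;> norm_num [qi,qj,qk,g_mk]⟩

theorem roots_bwd : ∀ a ∈ RL, (Real.sqrt 2)⁻¹ • g a ∈ rootsA3 := by
  intro a ha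
  fin_cases ha
  · exact ⟨1, (by norm_num [pm] : (1:ℝ) ∈ pm), 1, (by norm_num [pm] : (1:ℝ) ∈ pm), Or.inl (by congr 1; ext <;> norm_num [qi,qj,qk,g_mk])⟩
  · exact ⟨1, (by norm_num [pm] : (1:ℝ) ∈ pm), 1, (by norm_num [pm] : (1:ℝ) ∈ pm), (Or.inr ∘ Or.inl) (by congr 1; ext <;> norm_num [qi,qj,qk,g_mk])⟩
  · exact ⟨1, (by norm_num [pm] : (1:ℝ) ∈ pm), 1, (by norm_num [pm] : (1:ℝ) ∈ pm), (Or.inr ∘ Or.inr) (by congr 1; ext <;> norm_num [qi,qj,qk,g_mk])⟩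
  · exact ⟨1, (by norm_num [pm] : (1:ℝ) ∈ pm), -1, (by norm_num [pm] : (-1:ℝ) ∈ pm), Or.inl (by congr 1; ext <;> norm_num [qi,qj,qk,g_mk])⟩
  · exact ⟨1, (by norm_num [pm] : (1:ℝ) ∈ pm), -1, (by norm_num [pm] : (-1:ℝ) ∈ pm), (Or.inr ∘ Or.inl) (by congr 1; ext <;> norm_num [qi,qj,qk,g_mk])⟩
  · exact ⟨1, (by norm_num [pm] : (1:ℝ) ∈ pm), -1, (by norm_num [pm] : (-1:ℝ) ∈ pm), (Or.inr ∘ Or.inr) (by congr 1; ext <;> norm_num [qi,qj,qk,g_mk])⟩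
  · exact ⟨-1, (by norm_num [pm] : (-1:ℝ) ∈ pm), 1, (by norm_num [pm] : (1:ℝ) ∈ pm), Or.inl (by congr 1; ext <;> norm_num [qi,qj,qk,g_mk])⟩
  · exact ⟨-1, (by norm_num [pm] : (-1:ℝ) ∈ pm), 1, (by norm_num [pm] : (1:ℝ) ∈ pm), (Or.inr ∘ Or.inl) (by congr 1; ext <;> norm_num [qi,qj,qk,g_mk])⟩
  · exact ⟨-1, (by norm_num [pm] : (-1:ℝ) ∈ pm), 1, (by norm_num [pm] : (1:ℝ) ∈ pm), (Or.inr ∘ Or.inr) (by congr 1; ext <;> norm_num [qi,qj,qk,g_mk])⟩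
  · exact ⟨-1, (by norm_num [pm] : (-1:ℝ) ∈ pm), -1, (by norm_num [pm] : (-1:ℝ) ∈ pm), Or.inl (by congr 1; ext <;> norm_num [qi,qj,qk,g_mk])⟩
  · exact ⟨-1, (by norm_num [pm] : (-1:ℝ) ∈ pm), -1, (by norm_num [pm] : (-1:ℝ) ∈ pm), (Or.inr ∘ Or.inl) (by congr 1; ext <;> norm_num [qi,qj,qk,g_mk])⟩
  · exact ⟨-1, (by norm_num [pm] : (-1:ℝ) ∈ pm), -1, (by norm_num [pm] : (-1:ℝ) ∈ pm), (Or.inr ∘ Or.inr) (by congr 1; ext <;> norm_num [qi,qj,qk,g_mk])⟩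

theorem hur_fwd : ∀ x ∈ hurwitzUnits, ∃ c ∈ DL, x = (2:ℝ)⁻¹ • g c := by
  intro x hx
  rcases hx with h | ⟨e0, he0, e1, he1, e2, he2, e3, he3, rfl⟩
  · simp only [Set.mem_insert_iff, Set.mem_singleton_iff] at h
    rcases h with rfl | rfl | rfl | rfl | rfl | rfl | rfl | rfl
    · exact ⟨(⟨2,0,0,0⟩ : Quaternion ℤ), by decide, by ext <;> norm_num [qi,qj,qk,g_mk]⟩
    · exact ⟨(⟨-2,0,0,0⟩ : Quaternion ℤ), by decide, by ext <;> norm_num [qi,qj,qk,g_mk]⟩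
    · exact ⟨(⟨0,2,0,0⟩ : Quaternion ℤ), by decide, by ext <;> norm_num [qi,qj,qk,g_mk]⟩
    · exact ⟨(⟨0,-2,0,0⟩ : Quaternion ℤ), by decide, by ext <;> norm_num [qi,qj,qk,g_mk]⟩
    · exact ⟨(⟨0,0,2,0⟩ : Quaternion ℤ), by decide, by ext <;> norm_num [qi,qj,qk,g_mk]⟩
    · exact ⟨(⟨0,0,-2,0⟩ : Quaternion ℤ), by decide, by ext <;> norm_num [qi,qj,qk,g_mk]⟩
    · exact ⟨(⟨0,0,0,2⟩ : Quaternion ℤ), by decide, by ext <;> norm_num [qi,qj,qk,g_mk]⟩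
    · exact ⟨(⟨0,0,0,-2⟩ : Quaternion ℤ), by decide, by ext <;> norm_num [qi,qj,qk,g_mk]⟩
  · simp only [pm, Set.mem_insert_iff, Set.mem_singleton_iff] at he0 he1 he2 he3
    rcases he0 with rfl | rfl <;> rcases he1 with rfl | rfl <;>
      rcases he2 with rfl | rfl <;> rcases he3 with rfl | rfl
    · exact ⟨(⟨1,1,1,1⟩ : Quaternion ℤ), by decide, by ext <;> norm_num [qi,qj,qk,g_mk]⟩
    · exact ⟨(⟨1,1,1,-1⟩ : Quaternion ℤ), by decide, by ext <;> norm_num [qi,qj,qk,g_mk]⟩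
    · exact ⟨(⟨1,1,-1,1⟩ : Quaternion ℤ), by decide, by ext <;> norm_num [qi,qj,qk,g_mk]⟩
    · exact ⟨(⟨1,1,-1,-1⟩ : Quaternion ℤ), by decide, by ext <;> norm_num [qi,qj,qk,g_mk]⟩
    · exact ⟨(⟨1,-1,1,1⟩ : Quaternion ℤ), by decide, by ext <;> norm_num [qi,qj,qk,g_mk]⟩
    · exact ⟨(⟨1,-1,1,-1⟩ : Quaternion ℤ), by decide, by ext <;> norm_num [qi,qj,qk,g_mk]⟩
    · exact ⟨(⟨1,-1,-1,1⟩ : Quaternion ℤ), by decide, by ext <;> norm_num [qi,qj,qk,g_mk]⟩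
    · exact ⟨(⟨1,-1,-1,-1⟩ : Quaternion ℤ), by decide, by ext <;> norm_num [qi,qj,qk,g_mk]⟩
    · exact ⟨(⟨-1,1,1,1⟩ : Quaternion ℤ), by decide, by ext <;> norm_num [qi,qj,qk,g_mk]⟩
    · exact ⟨(⟨-1,1,1,-1⟩ : Quaternion ℤ), by decide, by ext <;> norm_num [qi,qj,qk,g_mk]⟩
    · exact ⟨(⟨-1,1,-1,1⟩ : Quaternion ℤ), by decide, by ext <;> norm_num [qi,qj,qk,g_mk]⟩
    · exact ⟨(⟨-1,1,-1,-1⟩ : Quaternion ℤ), by decide, by ext <;> norm_num [qi,qj,qk,g_mk]⟩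
    · exact ⟨(⟨-1,-1,1,1⟩ : Quaternion ℤ), by decide, by ext <;> norm_num [qi,qj,qk,g_mk]⟩
    · exact ⟨(⟨-1,-1,1,-1⟩ : Quaternion ℤ), by decide, by ext <;> norm_num [qi,qj,qk,g_mk]⟩
    · exact ⟨(⟨-1,-1,-1,1⟩ : Quaternion ℤ), by decide, by ext <;> norm_num [qi,qj,qk,g_mk]⟩
    · exact ⟨(⟨-1,-1,-1,-1⟩ : Quaternion ℤ), by decide, by ext <;> norm_num [qi,qj,qk,g_mk]⟩

theorem hur_bwd : ∀ c ∈ DL, (2:ℝ)⁻¹ • g c ∈ hurwitzUnits := by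
  intro c hc
  fin_cases hc
  · refine Or.inl ?_
    simp only [Set.mem_insert_iff, Set.mem_singleton_iff]
    exact Or.inl (by ext <;> norm_num [qi,qj,qk,g_mk])
  · refine Or.inl ?_
    simp only [Set.mem_insert_iff, Set.mem_singleton_iff]
    exact Or.inr (Or.inl (by ext <;> norm_num [qi,qj,qk,g_mk]))
  · refine Or.inl ?_
    simp only [Set.mem_insert_iff, Set.mem_singleton_iff]
    exact Or.inr (Or.inr (Or.inl (by ext <;> norm_num [qi,qj,qk,g_mk])))
  · refine Or.inl ?_
    simp only [Set.mem_insert_iff, Set.mem_singleton_iff]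
    exact Or.inr (Or.inr (Or.inr (Or.inl (by ext <;> norm_num [qi,qj,qk,g_mk]))))
  · refine Or.inl ?_
    simp only [Set.mem_insert_iff, Set.mem_singleton_iff]
    exact Or.inr (Or.inr (Or.inr (Or.inr (Or.inl (by ext <;> norm_num [qi,qj,qk,g_mk])))))
  · refine Or.inl ?_
    simp only [Set.mem_insert_iff, Set.mem_singleton_iff]
    exact Or.inr (Or.inr (Or.inr (Or.inr (Or.inr (Or.inl (by ext <;> norm_num [qi,qj,qk,g_mk]))))))
  · refine Or.inl ?_
    simp only [Set.mem_insert_iff, Set.mem_singleton_iff]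
    exact Or.inr (Or.inr (Or.inr (Or.inr (Or.inr (Or.inr (Or.inl (by ext <;> norm_num [qi,qj,qk,g_mk])))))))
  · refine Or.inl ?_
    simp only [Set.mem_insert_iff, Set.mem_singleton_iff]
    exact Or.inr (Or.inr (Or.inr (Or.inr (Or.inr (Or.inr (Or.inr ((by ext <;> norm_num [qi,qj,qk,g_mk]))))))))
  · exact Or.inr ⟨1, (by norm_num [pm] : (1:ℝ) ∈ pm), 1, (by norm_num [pm] : (1:ℝ) ∈ pm), 1, (by norm_num [pm] : (1:ℝ) ∈ pm), 1, (by norm_num [pm] : (1:ℝ) ∈ pm), by ext <;> norm_num [qi,qj,qk,g_mk]⟩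
  · exact Or.inr ⟨1, (by norm_num [pm] : (1:ℝ) ∈ pm), 1, (by norm_num [pm] : (1:ℝ) ∈ pm), 1, (by norm_num [pm] : (1:ℝ) ∈ pm), -1, (by norm_num [pm] : (-1:ℝ) ∈ pm), by ext <;> norm_num [qi,qj,qk,g_mk]⟩
  · exact Or.inr ⟨1, (by norm_num [pm] : (1:ℝ) ∈ pm), 1, (by norm_num [pm] : (1:ℝ) ∈ pm), -1, (by norm_num [pm] : (-1:ℝ) ∈ pm), 1, (by norm_num [pm] : (1:ℝ) ∈ pm), by ext <;> norm_num [qi,qj,qk,g_mk]⟩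
  · exact Or.inr ⟨1, (by norm_num [pm] : (1:ℝ) ∈ pm), 1, (by norm_num [pm] : (1:ℝ) ∈ pm), -1, (by norm_num [pm] : (-1:ℝ) ∈ pm), -1, (by norm_num [pm] : (-1:ℝ) ∈ pm), by ext <;> norm_num [qi,qj,qk,g_mk]⟩
  · exact Or.inr ⟨1, (by norm_num [pm] : (1:ℝ) ∈ pm), -1, (by norm_num [pm] : (-1:ℝ) ∈ pm), 1, (by norm_num [pm] : (1:ℝ) ∈ pm), 1, (by norm_num [pm] : (1:ℝ) ∈ pm), by ext <;> norm_num [qi,qj,qk,g_mk]⟩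
  · exact Or.inr ⟨1, (by norm_num [pm] : (1:ℝ) ∈ pm), -1, (by norm_num [pm] : (-1:ℝ) ∈ pm), 1, (by norm_num [pm] : (1:ℝ) ∈ pm), -1, (by norm_num [pm] : (-1:ℝ) ∈ pm), by ext <;> norm_num [qi,qj,qk,g_mk]⟩
  · exact Or.inr ⟨1, (by norm_num [pm] : (1:ℝ) ∈ pm), -1, (by norm_num [pm] : (-1:ℝ) ∈ pm), -1, (by norm_num [pm] : (-1:ℝ) ∈ pm), 1, (by norm_num [pm] : (1:ℝ) ∈ pm), by ext <;> norm_num [qi,qj,qk,g_mk]⟩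
  · exact Or.inr ⟨1, (by norm_num [pm] : (1:ℝ) ∈ pm), -1, (by norm_num [pm] : (-1:ℝ) ∈ pm), -1, (by norm_num [pm] : (-1:ℝ) ∈ pm), -1, (by norm_num [pm] : (-1:ℝ) ∈ pm), by ext <;> norm_num [qi,qj,qk,g_mk]⟩
  · exact Or.inr ⟨-1, (by norm_num [pm] : (-1:ℝ) ∈ pm), 1, (by norm_num [pm] : (1:ℝ) ∈ pm), 1, (by norm_num [pm] : (1:ℝ) ∈ pm), 1, (by norm_num [pm] : (1:ℝ) ∈ pm), by ext <;> norm_num [qi,qj,qk,g_mk]⟩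
  · exact Or.inr ⟨-1, (by norm_num [pm] : (-1:ℝ) ∈ pm), 1, (by norm_num [pm] : (1:ℝ) ∈ pm), 1, (by norm_num [pm] : (1:ℝ) ∈ pm), -1, (by norm_num [pm] : (-1:ℝ) ∈ pm), by ext <;> norm_num [qi,qj,qk,g_mk]⟩
  · exact Or.inr ⟨-1, (by norm_num [pm] : (-1:ℝ) ∈ pm), 1, (by norm_num [pm] : (1:ℝ) ∈ pm), -1, (by norm_num [pm] : (-1:ℝ) ∈ pm), 1, (by norm_num [pm] : (1:ℝ) ∈ pm), by ext <;> norm_num [qi,qj,qk,g_mk]⟩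
  · exact Or.inr ⟨-1, (by norm_num [pm] : (-1:ℝ) ∈ pm), 1, (by norm_num [pm] : (1:ℝ) ∈ pm), -1, (by norm_num [pm] : (-1:ℝ) ∈ pm), -1, (by norm_num [pm] : (-1:ℝ) ∈ pm), by ext <;> norm_num [qi,qj,qk,g_mk]⟩
  · exact Or.inr ⟨-1, (by norm_num [pm] : (-1:ℝ) ∈ pm), -1, (by norm_num [pm] : (-1:ℝ) ∈ pm), 1, (by norm_num [pm] : (1:ℝ) ∈ pm), 1, (by norm_num [pm] : (1:ℝ) ∈ pm), by ext <;> norm_num [qi,qj,qk,g_mk]⟩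
  · exact Or.inr ⟨-1, (by norm_num [pm] : (-1:ℝ) ∈ pm), -1, (by norm_num [pm] : (-1:ℝ) ∈ pm), 1, (by norm_num [pm] : (1:ℝ) ∈ pm), -1, (by norm_num [pm] : (-1:ℝ) ∈ pm), by ext <;> norm_num [qi,qj,qk,g_mk]⟩
  · exact Or.inr ⟨-1, (by norm_num [pm] : (-1:ℝ) ∈ pm), -1, (by norm_num [pm] : (-1:ℝ) ∈ pm), -1, (by norm_num [pm] : (-1:ℝ) ∈ pm), 1, (by norm_num [pm] : (1:ℝ) ∈ pm), by ext <;> norm_num [qi,qj,qk,g_mk]⟩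
  · exact Or.inr ⟨-1, (by norm_num [pm] : (-1:ℝ) ∈ pm), -1, (by norm_num [pm] : (-1:ℝ) ∈ pm), -1, (by norm_num [pm] : (-1:ℝ) ∈ pm), -1, (by norm_num [pm] : (-1:ℝ) ∈ pm), by ext <;> norm_num [qi,qj,qk,g_mk]⟩

/-- The binary tetrahedral group as a subgroup of the units. -/
def H : Subgroup (Quaternion ℝ)ˣ where
  carrier := {u | ∃ c ∈ DL, (u : Quaternion ℝ) = (2:ℝ)⁻¹ • g c}
  one_mem' := ⟨⟨2,0,0,0⟩, by decide, by ext <;> norm_num [g_mk]⟩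
  mul_mem' := by
    rintro u v ⟨c₁, hc₁, h₁⟩ ⟨c₂, hc₂, h₂⟩
    obtain ⟨c₃, hc₃, h₃⟩ := mul_closedDL c₁ hc₁ c₂ hc₂
    exact ⟨c₃, hc₃, by rw [Units.val_mul, h₁, h₂, key_prod2 h₃]⟩
  inv_mem' := by
    rintro u ⟨c, hc, h⟩
    obtain ⟨b, hb, hab⟩ := inv_closedDL c hc
    refine ⟨b, hb, ?_⟩
    rw [Units.val_inv_eq_inv_val]
    refine inv_eq_of_mul_eq_one_right ?_
    rw [h, smul_mul_smul', ← map_mul, hab]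
    ext <;> norm_num [g_mk]

theorem mem_H {u : (Quaternion ℝ)ˣ} :
    u ∈ H ↔ ∃ c ∈ DL, (u : Quaternion ℝ) = (2:ℝ)⁻¹ • g c := Iff.rfl

theorem closure_eq_H : Subgroup.closure rotorGenA3 = H := by
  apply le_antisymm
  · rw [Subgroup.closure_le]
    rintro u ⟨p, hp, q, hq, hu⟩
    obtain ⟨a, ha, rfl⟩ := roots_fwd p hp
    obtain ⟨b, hb, rfl⟩ := roots_fwd q hq
    exact ⟨a * b, gen_memDL a ha b hb, by rw [hu, key_prod]⟩
  · rintro u ⟨c, hc, hu⟩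
    obtain ⟨a₁, ha₁, b₁, hb₁, a₂, ha₂, b₂, hb₂, hw⟩ := surj_witDL c hc
    have hm : ∀ a ∈ RL, ∀ b ∈ RL,
        ((Real.sqrt 2)⁻¹ • g a) * ((Real.sqrt 2)⁻¹ • g b) ≠ 0 := by
      intro a ha b hb
      rw [key_prod]
      exact half_g_ne_zero (gen_memDL a ha b hb)
    set x₁ := ((Real.sqrt 2)⁻¹ • g a₁) * ((Real.sqrt 2)⁻¹ • g b₁) with hx₁
    set x₂ := ((Real.sqrt 2)⁻¹ • g a₂) * ((Real.sqrt 2)⁻¹ • g b₂) with hx₂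
    have h₁ : Units.mk0 x₁ (hm a₁ ha₁ b₁ hb₁) ∈ Subgroup.closure rotorGenA3 :=
      Subgroup.subset_closure
        ⟨_, roots_bwd a₁ ha₁, _, roots_bwd b₁ hb₁, rfl⟩
    have h₂ : Units.mk0 x₂ (hm a₂ ha₂ b₂ hb₂) ∈ Subgroup.closure rotorGenA3 :=
      Subgroup.subset_closure
        ⟨_, roots_bwd a₂ ha₂, _, roots_bwd b₂ hb₂, rfl⟩
    have : u = Units.mk0 x₁ (hm a₁ ha₁ b₁ hb₁) * Units.mk0 x₂ (hm a₂ ha₂ b₂ hb₂) := by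
      apply Units.ext
      rw [Units.val_mul, Units.val_mk0, Units.val_mk0, hu, hx₁, hx₂,
        key_prod, key_prod, key_prod2 (by rw [← hw])]
    rw [this]
    exact mul_mem h₁ h₂

theorem half_inj : Function.Injective (fun c : Quaternion ℤ => (2:ℝ)⁻¹ • g c) := by
  intro x y h
  exact g_inj (smul_right_injective (Quaternion ℝ) (by norm_num : (2:ℝ)⁻¹ ≠ 0) h)

/- ### Main theorem -/

theorem rotor_group_A3 :
    ((fun u : (Quaternion ℝ)ˣ => (u : Quaternion ℝ)) ''
        ((Subgroup.closure rotorGenA3 : Subgroup (Quaternion ℝ)ˣ) : Set (Quaternion ℝ)ˣ)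
      = hurwitzUnits) ∧
    Nat.card (Subgroup.closure rotorGenA3 : Subgroup (Quaternion ℝ)ˣ) = 24 := by
  rw [closure_eq_H]
  constructor
  · ext x
    constructor
    · rintro ⟨u, hu, rfl⟩
      obtain ⟨c, hc, h⟩ := hu
      have := hur_bwd c hc
      rwa [← h] at this
    · intro hx
      obtain ⟨c, hc, rfl⟩ := hur_fwd x hx
      exact ⟨Units.mk0 _ (half_g_ne_zero hc), ⟨c, hc, rfl⟩, rfl⟩
  · have hb : Function.Bijective
        (fun c : {c : Quaternion ℤ // c ∈ DL.toFinset} =>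
          (⟨Units.mk0 _ (half_g_ne_zero (List.mem_toFinset.mp c.2)),
            ⟨c.1, List.mem_toFinset.mp c.2, rfl⟩⟩ : H)) := by
      constructor
      · intro c c' h
        apply Subtype.ext
        have := congrArg (fun u : H => ((u : (Quaternion ℝ)ˣ) : Quaternion ℝ)) h
        exact half_inj this
      · rintro ⟨u, c, hc, hu⟩
        refine ⟨⟨c, List.mem_toFinset.mpr hc⟩, ?_⟩
        apply Subtype.ext
        apply Units.ext
        rw [Units.val_mk0, hu]
    rw [← Nat.card_eq_of_bijective _ hb, Nat.card_eq_fintype_card, Fintype.card_coe]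
    decide
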